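/- Fix q₀ ∈ U such that K(q₀) is invertible, and let α ∈ ℂ^m (regarded also as a real tangent vector to ℝ^{2m} ≅ ℂ^m). Then the real directional derivative of the first component z¹ of z at q₀ along α vanishes, i.e. (fderiv ℝ z¹ q₀)(α) = 0, if and only if the determinant of the m×m matrix obtained from K(q₀) by replacing its first column with the vector w(α, z(q₀)) = α − M(z(q₀))·ᾱ is zero. -/

import Mathlib

open Matrix

/-- Invariance of the first holomorphic coordinate `z¹` under a
constant vector field `α`, characterized by the vanishing of the determinant of
`K(q₀)` with its first column replaced by `w(α, z(q₀)) = α − M(z(q₀))·ᾱ`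
(Proposition 2.1 of Baird–Wood, specialized to a constant direction). -/
theorem invariance_iff_det_vanishes
    (m : ℕ) (hm : 2 ≤ m)
    (V : Set (Fin m → ℂ)) (hV : IsOpen V)
    (M : (Fin m → ℂ) → Matrix (Fin m) (Fin m) ℂ)
    (hM : ∀ i j, DifferentiableOn ℂ (fun ζ => M ζ i j) V)
    (hManti : ∀ ζ ∈ V, (M ζ)ᵀ = -(M ζ))
    (h : (Fin m → ℂ) → (Fin m → ℂ))
    (hh : ∀ i, DifferentiableOn ℂ (fun ζ => h ζ i) V)
    (F : (Fin m → ℂ) → (Fin m → ℂ) → (Fin m → ℂ))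
    (hF : ∀ q ζ, F q ζ =
      fun i => q i - (∑ j, M ζ i j * (starRingEnd ℂ) (q j)) - h ζ i)
    (U : Set (Fin m → ℂ)) (hU : IsOpen U)
    (z : (Fin m → ℂ) → (Fin m → ℂ))
    (hzV : ∀ q ∈ U, z q ∈ V)
    (hzF : ∀ q ∈ U, F q (z q) = 0)
    (hzdiff : DifferentiableOn ℝ z U)
    (K : (Fin m → ℂ) → Matrix (Fin m) (Fin m) ℂ)
    (hK : ∀ q ∈ U, ∀ i j, K q i j =
      fderiv ℂ (fun ζ => F q ζ i) (z q) (Pi.single j 1))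
    (q₀ : Fin m → ℂ) (hq₀ : q₀ ∈ U)
    (hKinv : IsUnit (K q₀).det)
    (α : Fin m → ℂ) :
    fderiv ℝ (fun q => z q (⟨0, by omega⟩ : Fin m)) q₀ α = 0 ↔
      (Matrix.updateCol (K q₀) (⟨0, by omega⟩ : Fin m)
        (fun i => α i - ∑ j, M (z q₀) i j * (starRingEnd ℂ) (α j))).det = 0 := by
  classical
  have hzq₀V : z q₀ ∈ V := hzV q₀ hq₀
  have hzAt : DifferentiableAt ℝ z q₀ := hzdiff.differentiableAt (hU.mem_nhds hq₀)
  set v : (Fin m → ℂ) →L[ℝ] (Fin m → ℂ) := fderiv ℝ z q₀ with hv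
  have hzHas : HasFDerivAt z v q₀ := hzAt.hasFDerivAt
  set DM : Fin m → Fin m → ((Fin m → ℂ) →L[ℂ] ℂ) :=
    fun i j => fderiv ℂ (fun ζ => M ζ i j) (z q₀) with hDM
  set Dh : Fin m → ((Fin m → ℂ) →L[ℂ] ℂ) :=
    fun i => fderiv ℂ (fun ζ => h ζ i) (z q₀) with hDh
  have hMHas : ∀ i j, HasFDerivAt (fun ζ => M ζ i j) (DM i j) (z q₀) := fun i j =>
    ((hM i j).differentiableAt (hV.mem_nhds hzq₀V)).hasFDerivAt
  have hhHas : ∀ i, HasFDerivAt (fun ζ => h ζ i) (Dh i) (z q₀) := fun i =>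
    ((hh i).differentiableAt (hV.mem_nhds hzq₀V)).hasFDerivAt
  -- K entries
  have hKval : ∀ i j, K q₀ i j =
      -(∑ k, (starRingEnd ℂ) (q₀ k) • DM i k + Dh i) (Pi.single j 1) := by
    intro i j
    have hFq : (fun ζ => F q₀ ζ i) =
        fun ζ => q₀ i - (∑ k, M ζ i k * (starRingEnd ℂ) (q₀ k)) - h ζ i := by
      funext ζ; rw [hF]
    have hFiHas : HasFDerivAt (fun ζ => F q₀ ζ i)
        ((0 - ∑ k, (starRingEnd ℂ) (q₀ k) • DM i k) - Dh i) (z q₀) := by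
      rw [hFq]
      exact ((hasFDerivAt_const (q₀ i) (z q₀)).fun_sub
        (HasFDerivAt.fun_sum fun k _ => (hMHas i k).mul_const _)).fun_sub (hhHas i)
    rw [hK q₀ hq₀ i j, hFiHas.fderiv]
    simp [sub_eq_add_neg, neg_add, add_comm]
  -- derivative of q ↦ F q (z q) i over ℝ is zero, giving the key linear relation
  have key : ∀ i, (K q₀ *ᵥ (v α)) i
      = -(α i - ∑ k, M (z q₀) i k * (starRingEnd ℂ) (α k)) := by
    intro i
    -- hasFDerivAt for q ↦ F q (z q) i
    have hGeq : (fun q => F q (z q) i) =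
        fun q => q i - (∑ k, M (z q) i k * (starRingEnd ℂ) (q k)) - h (z q) i := by
      funext q; rw [hF]
    have hMz : ∀ k, HasFDerivAt (fun q => M (z q) i k)
        (((DM i k).restrictScalars ℝ).comp v) q₀ := fun k =>
      ((hMHas i k).restrictScalars ℝ).comp q₀ hzHas
    have hconj : ∀ k : Fin m, HasFDerivAt (fun q : Fin m → ℂ => (starRingEnd ℂ) (q k))
        ((Complex.conjCLE.toContinuousLinearMap).comp (ContinuousLinearMap.proj k)) q₀ := fun k => by
      exact
        ((Complex.conjCLE.toContinuousLinearMap).comp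
          (ContinuousLinearMap.proj k) : (Fin m → ℂ) →L[ℝ] ℂ).hasFDerivAt (x := q₀)
    have hqi : HasFDerivAt (fun q : Fin m → ℂ => q i)
        (ContinuousLinearMap.proj i : (Fin m → ℂ) →L[ℝ] ℂ) q₀ := by
      exact (ContinuousLinearMap.proj (R := ℝ) (φ := fun _ : Fin m => ℂ) i).hasFDerivAt (x := q₀)
    have hhz : HasFDerivAt (fun q => h (z q) i) (((Dh i).restrictScalars ℝ).comp v) q₀ :=
      ((hhHas i).restrictScalars ℝ).comp q₀ hzHas
    have hGi : HasFDerivAt (fun q => F q (z q) i)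
        ((ContinuousLinearMap.proj i -
          ∑ k, (M (z q₀) i k • ((Complex.conjCLE.toContinuousLinearMap).comp
              (ContinuousLinearMap.proj k)) +
            (starRingEnd ℂ) (q₀ k) • (((DM i k).restrictScalars ℝ).comp v))) -
          ((Dh i).restrictScalars ℝ).comp v) q₀ := by
      rw [hGeq]
      exact (hqi.fun_sub (HasFDerivAt.fun_sum fun k _ => (hMz k).fun_mul (hconj k))).fun_sub hhz
    have hG0 : HasFDerivAt (fun q => F q (z q) i)
        (0 : (Fin m → ℂ) →L[ℝ] ℂ) q₀ := by
      refine (hasFDerivAt_const (0:ℂ) q₀).congr_of_eventuallyEq ?_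
      filter_upwards [hU.mem_nhds hq₀] with q hq
      rw [hzF q hq]; rfl
    have hD0 := hGi.unique hG0
    have eq1 : α i - (∑ k, (M (z q₀) i k * (starRingEnd ℂ) (α k) +
        (starRingEnd ℂ) (q₀ k) * DM i k (v α))) - Dh i (v α) = 0 := by
      have := congrFun (congrArg DFunLike.coe hD0) α
      simpa [ContinuousLinearMap.sub_apply, ContinuousLinearMap.sum_apply,
        ContinuousLinearMap.add_apply, ContinuousLinearMap.smul_apply,
        ContinuousLinearMap.comp_apply, ContinuousLinearMap.proj_apply,
        smul_eq_mul, Complex.conjCLE_apply] using this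
    -- linearity: evaluate mulVec
    have hlin : ∀ (T : (Fin m → ℂ) →L[ℂ] ℂ) (c : Fin m → ℂ),
        ∑ j, T (Pi.single j 1) * c j = T c := by
      intro T c
      have hc : c = ∑ j, c j • (Pi.single j 1 : Fin m → ℂ) := by
        funext k
        simp [Pi.single_apply, Finset.sum_apply]
      calc ∑ j, T (Pi.single j 1) * c j
          = ∑ j, c j • T (Pi.single j 1 : Fin m → ℂ) := by
            simp [smul_eq_mul, mul_comm]
        _ = T (∑ j, c j • (Pi.single j 1 : Fin m → ℂ)) := by rw [map_sum]; simp
        _ = T c := by rw [← hc]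
    have hmv : (K q₀ *ᵥ (v α)) i
        = -(∑ k, (starRingEnd ℂ) (q₀ k) * DM i k (v α)) - Dh i (v α) := by
      have hmve : (K q₀ *ᵥ (v α)) i = ∑ j, K q₀ i j * (v α) j := by
        simp [Matrix.mulVec, dotProduct]
      have hstep : (K q₀ *ᵥ (v α)) i
          = ∑ j, (-(∑ k, (starRingEnd ℂ) (q₀ k) * (DM i k (Pi.single j 1) * (v α) j))
              - Dh i (Pi.single j 1) * (v α) j) := by
        rw [hmve]
        refine Finset.sum_congr rfl fun j _ => ?_
        rw [hKval i j]
        simp only [ContinuousLinearMap.neg_apply, ContinuousLinearMap.add_apply,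
          ContinuousLinearMap.sum_apply, ContinuousLinearMap.smul_apply, smul_eq_mul]
        rw [neg_add, add_mul, neg_mul, neg_mul, Finset.sum_mul, ← sub_eq_add_neg]
        simp [mul_assoc]
      rw [hstep, Finset.sum_sub_distrib, hlin (Dh i) (v α)]
      congr 1
      rw [Finset.sum_neg_distrib, Finset.sum_comm]
      congr 1
      refine Finset.sum_congr rfl fun k _ => ?_
      rw [← Finset.mul_sum, hlin (DM i k) (v α)]
    rw [hmv]
    have eq2 := eq1
    rw [Finset.sum_add_distrib] at eq2
    linear_combination eq2
  -- final algebra via Cramer's rule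
  have hKu : Function.Injective ((K q₀).mulVec) :=
    Matrix.mulVec_injective_iff_isUnit.mpr ((Matrix.isUnit_iff_isUnit_det _).mpr hKinv)
  have hKw : K q₀ *ᵥ (-(v α)) =
      fun i => α i - ∑ j, M (z q₀) i j * (starRingEnd ℂ) (α j) := by
    rw [Matrix.mulVec_neg]
    funext i
    rw [Pi.neg_apply, key i, neg_neg]
  have hcram : Matrix.cramer (K q₀)
      (fun i => α i - ∑ j, M (z q₀) i j * (starRingEnd ℂ) (α j))
      = (K q₀).det • (-(v α)) := by
    apply hKu
    rw [Matrix.mulVec_cramer, ← hKw, Matrix.mulVec_smul]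
  have main : ∀ i0 : Fin m, (fderiv ℝ (fun q => z q i0) q₀ α = 0 ↔
      (Matrix.updateCol (K q₀) i0
        (fun i => α i - ∑ j, M (z q₀) i j * (starRingEnd ℂ) (α j))).det = 0) := by
    intro i0
    have hfst : fderiv ℝ (fun q => z q i0) q₀ α = v α i0 := by
      have hc : HasFDerivAt (fun q => z q i0)
          ((ContinuousLinearMap.proj i0).comp v) q₀ :=
        (ContinuousLinearMap.proj (R := ℝ) (φ := fun _ : Fin m => ℂ) i0).hasFDerivAt.comp q₀ hzHas
      rw [hc.fderiv]; rfl
    have hdet : (Matrix.updateCol (K q₀) i0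
        (fun i => α i - ∑ j, M (z q₀) i j * (starRingEnd ℂ) (α j))).det
        = (K q₀).det * (-(v α i0)) := by
      rw [← Matrix.cramer_apply, hcram]
      simp
    rw [hfst, hdet]
    simp [mul_eq_zero, hKinv.ne_zero, neg_eq_zero]
  exact main _
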